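/- Let p be a prime, n ≥ 1, and let f ∈ ℤ[x] be written in the falling-factorial basis as f = Σ_k a_k·(x)_k. Then f(a) ≡ 0 (mod p^n) for every integer a if and only if a_k ≡ 0 (mod p^{n−α_p(k)}) for every k with α_p(k) < n (equivalently, p^{max(n−α_p(k),0)} divides a_k for all k). -/

import Mathlib

/-- `α_p(n)`: the `p`-adic valuation of `n!`. -/
def alphaP (p n : ℕ) : ℕ := padicValNat p (Nat.factorial n)

lemma factorial_dvd_descPochhammer_eval (k : ℕ) (x : ℤ) :
    (k.factorial : ℤ) ∣ (descPochhammer ℤ k).eval x := by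
  rw [Polynomial.eval_eq_smeval, Ring.descPochhammer_eq_factorial_smul_choose]
  exact ⟨Ring.choose x k, by simp [nsmul_eq_mul]⟩

lemma pow_alphaP_dvd (p k : ℕ) : (p : ℤ) ^ (alphaP p k) ∣ (k.factorial : ℤ) := by
  exact_mod_cast Int.natCast_dvd_natCast.mpr pow_padicValNat_dvd

lemma pow_dvd_term (p : ℕ) (n k : ℕ) (a : ℤ) (x : ℤ)
    (h : (p : ℤ) ^ (n - alphaP p k) ∣ a) :
    (p : ℤ) ^ n ∣ a * (descPochhammer ℤ k).eval x := by
  have h2 : (p : ℤ) ^ (alphaP p k) ∣ (descPochhammer ℤ k).eval x :=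
    (pow_alphaP_dvd p k).trans (factorial_dvd_descPochhammer_eval k x)
  calc (p : ℤ) ^ n ∣ (p : ℤ) ^ (n - alphaP p k + alphaP p k) :=
        pow_dvd_pow _ le_tsub_add
    _ = (p : ℤ) ^ (n - alphaP p k) * (p : ℤ) ^ (alphaP p k) := pow_add _ _ _
    _ ∣ a * (descPochhammer ℤ k).eval x := mul_dvd_mul h h2

lemma dvd_of_dvd_mul_factorial (p : ℕ) (hp : p.Prime) (n k : ℕ) (a : ℤ)
    (h : (p : ℤ) ^ n ∣ a * (k.factorial : ℤ)) :
    (p : ℤ) ^ (n - alphaP p k) ∣ a := by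
  rcases le_or_gt n (alphaP p k) with hle | hlt
  · rw [Nat.sub_eq_zero_of_le hle, pow_zero]
    exact one_dvd _
  · -- work in ℕ with natAbs
    have hfac : (k.factorial) ≠ 0 := Nat.factorial_ne_zero k
    have hα : alphaP p k = (Nat.factorial k).factorization p := by
      rw [Nat.factorization_def _ hp]; rfl
    have hnat : p ^ n ∣ a.natAbs * k.factorial := by
      have := Int.natAbs_dvd_natAbs.mpr h
      simpa [Int.natAbs_mul, Int.natAbs_pow] using this
    set m := (Nat.factorial k) / p ^ (alphaP p k) with hm
    have hsplit : k.factorial = p ^ (alphaP p k) * m := by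
      rw [hm, hα]
      exact (Nat.ordProj_mul_ordCompl_eq_self (k.factorial) p).symm
    have hcop : Nat.Coprime p m := by
      rw [hm, hα]
      exact Nat.coprime_ordCompl hp hfac
    have hdvd2 : p ^ (n - alphaP p k) ∣ a.natAbs * m := by
      have hp0 : p ^ (alphaP p k) ≠ 0 := pow_ne_zero _ hp.ne_zero
      have : p ^ (n - alphaP p k) * p ^ (alphaP p k) ∣
          (a.natAbs * m) * p ^ (alphaP p k) := by
        rw [← pow_add, Nat.sub_add_cancel hlt.le]
        calc p ^ n ∣ a.natAbs * k.factorial := hnat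
          _ = a.natAbs * m * p ^ (alphaP p k) := by rw [hsplit]; ring
      exact (mul_dvd_mul_iff_right hp0).mp this
    have hcop2 : Nat.Coprime (p ^ (n - alphaP p k)) m := hcop.pow_left _
    have := hcop2.dvd_of_dvd_mul_right hdvd2
    have : ((p : ℤ)) ^ (n - alphaP p k) ∣ ((a.natAbs : ℤ)) := by
      exact_mod_cast Int.natCast_dvd_natCast.mpr this
    exact Int.dvd_natAbs.mp this

/-- A polynomial `f ∈ ℤ[x]`, written in the falling-factorial basis as
`f = Σ_k a_k (x)_k`, induces the zero function mod `p^n` (i.e. `p^n ∣ f(a)`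
for every integer `a`) if and only if `p^{max(n - α_p(k), 0)} ∣ a_k`
for every `k` (here `n - alphaP p k` is truncated subtraction on `ℕ`). -/
theorem zero_function_mod_pn_iff (p : ℕ) (hp : p.Prime) (n : ℕ) (hn : 1 ≤ n)
    (N : ℕ) (a : ℕ → ℤ) (f : Polynomial ℤ)
    (hf : f = ∑ k ∈ Finset.range N, Polynomial.C (a k) * descPochhammer ℤ k) :
    (∀ x : ℤ, (p : ℤ) ^ n ∣ f.eval x) ↔
      ∀ k < N, (p : ℤ) ^ (n - alphaP p k) ∣ a k := by
  have heval : ∀ x : ℤ, f.eval x =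
      ∑ k ∈ Finset.range N, a k * (descPochhammer ℤ k).eval x := by
    intro x
    simp [hf, Polynomial.eval_finset_sum]
  constructor
  · intro hdvd k
    induction k using Nat.strong_induction_on with
    | _ k ih =>
      intro hk
      -- show p^n ∣ a k * k!
      have hkr : k ∈ Finset.range N := Finset.mem_range.mpr hk
      have hsum : f.eval (k : ℤ) = a k * (k.factorial : ℤ) +
          ∑ m ∈ (Finset.range N).erase k, a m * (descPochhammer ℤ m).eval (k : ℤ) := by
        rw [heval, ← Finset.add_sum_erase _ _ hkr,
          descPochhammer_eval_eq_descFactorial ℤ k k, Nat.descFactorial_self]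
      have hrest : (p : ℤ) ^ n ∣
          ∑ m ∈ (Finset.range N).erase k, a m * (descPochhammer ℤ m).eval (k : ℤ) := by
        apply Finset.dvd_sum
        intro m hm
        rcases lt_or_gt_of_ne (Finset.ne_of_mem_erase hm) with hlt | hgt
        · -- m < k : use ih
          exact pow_dvd_term p n m (a m) _
            (ih m hlt (Finset.mem_range.mp (Finset.mem_of_mem_erase hm)))
        · -- m > k : eval is zero
          have : (descPochhammer ℤ m).eval ((k : ℕ) : ℤ) = 0 := by
            rw [descPochhammer_eval_eq_descFactorial ℤ k m,
              Nat.descFactorial_eq_zero_iff_lt.mpr hgt, Nat.cast_zero]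
          rw [this, mul_zero]
          exact dvd_zero _
      have hmain : (p : ℤ) ^ n ∣ a k * (k.factorial : ℤ) := by
        have : a k * (k.factorial : ℤ) = f.eval (k : ℤ) -
            ∑ m ∈ (Finset.range N).erase k, a m * (descPochhammer ℤ m).eval (k : ℤ) := by
          rw [hsum]; ring
        rw [this]
        exact dvd_sub (hdvd _) hrest
      exact dvd_of_dvd_mul_factorial p hp n k (a k) hmain
  · intro h x
    rw [heval]
    apply Finset.dvd_sum
    intro k hk
    exact pow_dvd_term p n k (a k) x (h k (Finset.mem_range.mp hk))
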